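/- Let Y, Y' : [0,T] → ℝ be continuous, S : [0,T] → ℝ continuous, and K, K' : [0,T] → ℝ continuous nondecreasing with K(0)=K'(0)=0, such that Y(t) ≥ S(t), Y'(t) ≥ S(t) for all t, the measure dK is supported on {t : Y(t) = S(t)}, and dK' is supported on {t : Y'(t) = S(t)}. Then for any nonnegative continuous weight w : [0,T] → ℝ, ∫₀ᵀ w(s)(Y(s) − Y'(s)) d(K − K')(s) ≤ 0. -/

import Mathlib

open MeasureTheory

theorem stmt_5 (T : ℝ) (hT : 0 ≤ T) (Y Y' S : ℝ → ℝ)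
    (hY : ContinuousOn Y (Set.Icc 0 T)) (hY' : ContinuousOn Y' (Set.Icc 0 T))
    (hS : ContinuousOn S (Set.Icc 0 T))
    (K K' : StieltjesFunction ℝ) (hKc : Continuous K) (hK'c : Continuous K')
    (hK0 : K 0 = 0) (hK'0 : K' 0 = 0)
    (hYS : ∀ t ∈ Set.Icc 0 T, S t ≤ Y t) (hY'S : ∀ t ∈ Set.Icc 0 T, S t ≤ Y' t)
    (hK_supp : K.measure ({t | Y t ≠ S t} ∩ Set.Icc 0 T) = 0)
    (hK'_supp : K'.measure ({t | Y' t ≠ S t} ∩ Set.Icc 0 T) = 0)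
    (w : ℝ → ℝ) (hw : ContinuousOn w (Set.Icc 0 T)) (hw_nonneg : ∀ t ∈ Set.Icc 0 T, 0 ≤ w t) :
    (∫ s in Set.Icc 0 T, w s * (Y s - Y' s) ∂K.measure)
      - (∫ s in Set.Icc 0 T, w s * (Y s - Y' s) ∂K'.measure) ≤ 0 := by
  have h1 : (∫ s in Set.Icc 0 T, w s * (Y s - Y' s) ∂K.measure) ≤ 0 := by
    refine integral_nonpos_of_ae ?_
    rw [Filter.EventuallyLE, ae_restrict_iff' measurableSet_Icc, Filter.eventually_iff, mem_ae_iff]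
    refine measure_mono_null ?_ hK_supp
    intro s hs
    simp only [Set.mem_compl_iff, Set.mem_setOf_eq, Pi.zero_apply, _root_.not_imp] at hs
    refine ⟨fun hYS' => ?_, hs.1⟩
    exact hs.2 (mul_nonpos_of_nonneg_of_nonpos (hw_nonneg s hs.1)
      (by rw [hYS']; linarith [hY'S s hs.1]))
  have h2 : 0 ≤ (∫ s in Set.Icc 0 T, w s * (Y s - Y' s) ∂K'.measure) := by
    refine integral_nonneg_of_ae ?_
    rw [Filter.EventuallyLE, ae_restrict_iff' measurableSet_Icc, Filter.eventually_iff, mem_ae_iff]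
    refine measure_mono_null ?_ hK'_supp
    intro s hs
    simp only [Set.mem_compl_iff, Set.mem_setOf_eq, Pi.zero_apply, _root_.not_imp] at hs
    refine ⟨fun hYS' => ?_, hs.1⟩
    exact hs.2 (mul_nonneg (hw_nonneg s hs.1) (by rw [hYS']; linarith [hYS s hs.1]))
  linarith
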